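/- arXiv:2012.13465 — 3 statements merged into one kernel-verified Lean document; each statement's English description precedes it below -/
import Mathlib

section
/- For the asymptotically flat Plebański–Demiański metric with parameters m, a, l, C, Q (a² > l²), and Σ = r² + (l + a cosθ)², the function ψ(r, θ) = Σ·(κ − g^{ij}p_i p_j), with p₀ = −E, p₃ = L_z, evaluated at the ring singularity r = 0, cosθ = −l/a, equals −Q²·((a² − 2alC + l²)E − aL_z)² / ((a² − l²)(a² − l² + Q²)). -/
/-- The function `ψ(r,θ) = Σ (κ − g^{ij} pᵢ pⱼ)` for the asymptotically flat
Plebański–Demiański metric, with `p₀ = −E`, `p₃ = L_z`,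
`Σ = r² + (l + a cos θ)²`, `χ = a sin²θ − 2l(cos θ + C)`,
`Δ_r = r² − 2mr + a² − l² + Q²`, `Σ + aχ = r² + a² + l² − 2alC`, and
separated inverse-metric components `R^{ij}(r)`, `Θ^{ij}(θ)`. -/
noncomputable def PDpsi (m a l C Q E Lz κ r θ : ℝ) : ℝ :=
  (r ^ 2 + (l + a * Real.cos θ) ^ 2) * κ -
    ((-((r ^ 2 + a ^ 2 + l ^ 2 - 2 * a * l * C) ^ 2) * E ^ 2
        + 2 * a * (r ^ 2 + a ^ 2 + l ^ 2 - 2 * a * l * C) * E * Lz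
        - a ^ 2 * Lz ^ 2) / (r ^ 2 - 2 * m * r + a ^ 2 - l ^ 2 + Q ^ 2)
      + ((a * Real.sin θ ^ 2 - 2 * l * (Real.cos θ + C)) * E - Lz) ^ 2
          / Real.sin θ ^ 2)

/-- Equation (28): at the ring singularity `r = 0`, `cos θ = −l/a`, the
function `ψ` equals `−Q² ((a² − 2alC + l²) E − a L_z)² / ((a²−l²)(a²−l²+Q²))`. -/
theorem PDpsi_at_ring_singularity (m a l C Q E Lz κ θ₀ : ℝ)
    (ha : l ^ 2 < a ^ 2) (hQ : 0 < a ^ 2 - l ^ 2 + Q ^ 2)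
    (hθ : Real.cos θ₀ = -l / a) :
    PDpsi m a l C Q E Lz κ 0 θ₀ =
      -(Q ^ 2 * ((a ^ 2 - 2 * a * l * C + l ^ 2) * E - a * Lz) ^ 2) /
        ((a ^ 2 - l ^ 2) * (a ^ 2 - l ^ 2 + Q ^ 2)) := by
  have ha0 : a ≠ 0 := by nlinarith [sq_nonneg l]
  have hal : a ^ 2 - l ^ 2 ≠ 0 := by nlinarith
  have hsin : Real.sin θ₀ ^ 2 = (a ^ 2 - l ^ 2) / a ^ 2 := by
    have := Real.sin_sq_add_cos_sq θ₀
    field_simp [hθ] at this ⊢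
    have hc : Real.cos θ₀ * a = -l := by rw [hθ]; field_simp
    linear_combination a ^ 2 * this - (Real.cos θ₀ * a - l) * hc
  unfold PDpsi
  rw [hθ, hsin]
  have hsin0 : (a ^ 2 - l ^ 2) / a ^ 2 ≠ 0 := by
    exact div_ne_zero hal (pow_ne_zero 2 ha0)
  have hQ0 : (0:ℝ) ^ 2 - 2 * m * 0 + a ^ 2 - l ^ 2 + Q ^ 2 ≠ 0 := by nlinarith
  simp only [ne_eq, OfNat.ofNat_ne_zero, not_false_eq_true, zero_pow, mul_zero, sub_zero, zero_add] at hQ0 ⊢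
  field_simp
  ring
end

section
/- With the Plebański–Demiański setup and nonzero charge Q ≠ 0, a² > l², a² − l² + Q² > 0: if (a² − 2alC + l²)E ≠ aL_z, then ψ evaluated at the ring singularity (r = 0, cosθ = −l/a) is strictly negative. -/
/-- Case `Q ≠ 0`: if `(a² − 2alC + l²) E ≠ a L_z` then `ψ` is strictly
negative at the ring singularity, so causal geodesics avoid it. -/
theorem PDpsi_neg_at_ring_singularity (m a l C Q E Lz κ θ₀ : ℝ)
    (ha : l ^ 2 < a ^ 2) (hQ : 0 < a ^ 2 - l ^ 2 + Q ^ 2) (hQ0 : Q ≠ 0)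
    (hθ : Real.cos θ₀ = -l / a)
    (hE : (a ^ 2 - 2 * a * l * C + l ^ 2) * E ≠ a * Lz) :
    PDpsi m a l C Q E Lz κ 0 θ₀ < 0 := by
  have hal : (0:ℝ) < a ^ 2 - l ^ 2 := by linarith
  have ha0 : a ≠ 0 := by
    intro h; rw [h] at ha; nlinarith [sq_nonneg l]
  have hs : Real.sin θ₀ ^ 2 = (a ^ 2 - l ^ 2) / a ^ 2 := by
    have := Real.sin_sq_add_cos_sq θ₀
    rw [hθ] at this
    field_simp at this ⊢
    nlinarith [this]
  have hD : (a ^ 2 - 2 * a * l * C + l ^ 2) * E - a * Lz ≠ 0 := sub_ne_zero.mpr hE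
  have hkey : PDpsi m a l C Q E Lz κ 0 θ₀ =
      -Q ^ 2 * ((a ^ 2 - 2 * a * l * C + l ^ 2) * E - a * Lz) ^ 2 /
        ((a ^ 2 - l ^ 2) * (a ^ 2 - l ^ 2 + Q ^ 2)) := by
    unfold PDpsi
    rw [hθ, hs]
    have h1 : a ^ 2 - l ^ 2 + Q ^ 2 ≠ 0 := ne_of_gt hQ
    field_simp [h1]
    ring
  rw [hkey]
  apply div_neg_of_neg_of_pos
  · have h1 : 0 < ((a ^ 2 - 2 * a * l * C + l ^ 2) * E - a * Lz) ^ 2 := by positivity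
    have h2 : 0 < Q ^ 2 := by positivity
    nlinarith [mul_pos h2 h1]
  · positivity
end

section
/- For the Plebański–Demiański metric with (a² − 2alC + l²)E = aL_z, both first partial derivatives of ψ(r,θ) = Σ(κ − g^{ij}p_ip_j) with respect to r and θ vanish at r = 0, cosθ = −l/a, and the second derivatives satisfy ∂²_r ψ|_q = 2κ and ∂²_θ ψ|_q = 2κ(a² − l²). -/
private lemma hasDerivAt_congr' {f g : ℝ → ℝ} {f' g' x : ℝ} (h : HasDerivAt f f' x)
    (h1 : ∀ y, g y = f y) (h2 : g' = f') : HasDerivAt g g' x := by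
  subst h2; exact h.congr_of_eventuallyEq (Filter.Eventually.of_forall h1)

/-- Radial part: first and second derivatives of
`(r² + d)κ + E²r⁴/Δ_r − T` at `r = 0`. -/
private lemma PD_aux_r (κ E m b d T : ℝ) (hb : 0 < b) :
    deriv (fun r : ℝ => (r ^ 2 + d) * κ + E ^ 2 * r ^ 4 / (r ^ 2 - 2 * m * r + b) - T) 0 = 0 ∧
    deriv (deriv (fun r : ℝ => (r ^ 2 + d) * κ + E ^ 2 * r ^ 4 / (r ^ 2 - 2 * m * r + b) - T)) 0
      = 2 * κ := by
  set f : ℝ → ℝ := fun r => (r ^ 2 + d) * κ + E ^ 2 * r ^ 4 / (r ^ 2 - 2 * m * r + b) - T with hf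
  set G : ℝ → ℝ := fun r => 2 * r * κ +
      (E ^ 2 * (4 * r ^ 3) * (r ^ 2 - 2 * m * r + b) - E ^ 2 * r ^ 4 * (2 * r - 2 * m)) /
        (r ^ 2 - 2 * m * r + b) ^ 2 with hG
  have hden : ∀ r : ℝ, HasDerivAt (fun x : ℝ => x ^ 2 - 2 * m * x + b) (2 * r - 2 * m) r := by
    intro r
    exact hasDerivAt_congr'
      (((hasDerivAt_pow 2 r).sub ((hasDerivAt_id' r).const_mul (2 * m))).add_const b)
      (fun y => by simp only [Pi.add_apply, Pi.sub_apply, Pi.mul_apply, Pi.neg_apply, Pi.pow_apply, Pi.div_apply]) (by push_cast; ring)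
  have hnum : ∀ r : ℝ, HasDerivAt
      (fun x : ℝ => E ^ 2 * x ^ 4) (E ^ 2 * (4 * r ^ 3)) r := by
    intro r
    exact hasDerivAt_congr' ((hasDerivAt_pow 4 r).const_mul (E ^ 2))
      (fun y => rfl) (by push_cast; ring)
  have hder : ∀ r : ℝ, (r ^ 2 - 2 * m * r + b) ≠ 0 → HasDerivAt f (G r) r := by
    intro r hr
    have h4 : HasDerivAt (fun x : ℝ => (x ^ 2 + d) * κ) (2 * r * κ) r :=
      hasDerivAt_congr' (((hasDerivAt_pow 2 r).add_const d).mul_const κ)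
        (fun y => rfl) (by push_cast; ring)
    exact hasDerivAt_congr' ((h4.add ((hnum r).div (hden r) hr)).sub_const T)
      (fun y => rfl) (by ring)
  have h0 : ((0:ℝ) ^ 2 - 2 * m * 0 + b) ≠ 0 := by simpa using hb.ne'
  have hev : ∀ᶠ r in nhds (0:ℝ), (r ^ 2 - 2 * m * r + b) ≠ 0 :=
    ((by fun_prop : Continuous fun r : ℝ => r ^ 2 - 2 * m * r + b)).continuousAt.eventually_ne h0
  have hd1 : deriv f 0 = 0 := by
    rw [(hder 0 h0).deriv, hG]; norm_num
  have hev2 : deriv f =ᶠ[nhds (0:ℝ)] G := hev.mono fun r hr => (hder r hr).deriv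
  have hGd : HasDerivAt G (2 * κ) 0 := by
    have hA : HasDerivAt (fun x : ℝ => 2 * x * κ) (2 * κ) 0 := by
      simpa using (((hasDerivAt_id' (0:ℝ)).const_mul 2).mul_const κ)
    have hlin : HasDerivAt (fun x : ℝ => 2 * x - 2 * m) 2 0 := by
      simpa using ((hasDerivAt_id' (0:ℝ)).const_mul 2).sub_const (2 * m)
    have hcube : HasDerivAt (fun x : ℝ => E ^ 2 * (4 * x ^ 3)) (E ^ 2 * (4 * (3 * 0 ^ 2))) 0 := by
      exact hasDerivAt_congr' (((hasDerivAt_pow 3 (0:ℝ)).const_mul 4).const_mul (E ^ 2))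
        (fun y => rfl) (by push_cast; ring)
    have hN : HasDerivAt
        (fun x : ℝ =>
          E ^ 2 * (4 * x ^ 3) * (x ^ 2 - 2 * m * x + b) - E ^ 2 * x ^ 4 * (2 * x - 2 * m))
        0 0 := by
      exact hasDerivAt_congr' ((hcube.mul (hden 0)).sub ((hnum 0).mul hlin))
        (fun y => rfl) (by norm_num)
    have hD2 : HasDerivAt (fun x : ℝ => (x ^ 2 - 2 * m * x + b) ^ 2)
        (2 * ((0:ℝ) ^ 2 - 2 * m * 0 + b) ^ 1 * (2 * 0 - 2 * m)) 0 := (hden 0).pow 2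
    have hq := hN.div hD2 (pow_ne_zero 2 h0)
    refine hasDerivAt_congr' (hA.add hq) (fun y => rfl) ?_
    norm_num
  refine ⟨hd1, ?_⟩
  rw [hev2.deriv_eq, hGd.deriv]

/-- Angular part: first and second derivatives of
`(l + a cos θ)²κ − (χE − L_z)²/sin²θ` at the ring singularity. -/
private lemma PD_aux_t (a l C E Lz κ θ₀ : ℝ) (hs : Real.sin θ₀ ≠ 0)
    (hu : (a * Real.sin θ₀ ^ 2 - 2 * l * (Real.cos θ₀ + C)) * E - Lz = 0)
    (hl : l + a * Real.cos θ₀ = 0) :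
    deriv (fun θ => (l + a * Real.cos θ) ^ 2 * κ -
        ((a * Real.sin θ ^ 2 - 2 * l * (Real.cos θ + C)) * E - Lz) ^ 2 / Real.sin θ ^ 2) θ₀ = 0 ∧
    deriv (deriv (fun θ => (l + a * Real.cos θ) ^ 2 * κ -
        ((a * Real.sin θ ^ 2 - 2 * l * (Real.cos θ + C)) * E - Lz) ^ 2 / Real.sin θ ^ 2)) θ₀ =
      2 * a ^ 2 * κ * Real.sin θ₀ ^ 2 := by
  set f : ℝ → ℝ := fun θ => (l + a * Real.cos θ) ^ 2 * κ -
      ((a * Real.sin θ ^ 2 - 2 * l * (Real.cos θ + C)) * E - Lz) ^ 2 / Real.sin θ ^ 2 with hf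
  set D : ℝ → ℝ := fun θ => 2 * (l + a * Real.cos θ) * (a * -Real.sin θ) * κ -
      (2 * ((a * Real.sin θ ^ 2 - 2 * l * (Real.cos θ + C)) * E - Lz) *
          ((2 * a * Real.sin θ * Real.cos θ + 2 * l * Real.sin θ) * E) * Real.sin θ ^ 2 -
        ((a * Real.sin θ ^ 2 - 2 * l * (Real.cos θ + C)) * E - Lz) ^ 2 *
          (2 * Real.sin θ * Real.cos θ)) / (Real.sin θ ^ 2) ^ 2 with hD
  have hu_d : ∀ θ : ℝ, HasDerivAt
      (fun θ => (a * Real.sin θ ^ 2 - 2 * l * (Real.cos θ + C)) * E - Lz)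
      ((2 * a * Real.sin θ * Real.cos θ + 2 * l * Real.sin θ) * E) θ := by
    intro θ
    exact hasDerivAt_congr'
      (((((Real.hasDerivAt_sin θ).pow 2).const_mul a).sub
        (((Real.hasDerivAt_cos θ).add_const C).const_mul (2 * l))).mul_const E |>.sub_const Lz)
      (fun y => rfl) (by push_cast; ring)
  have hder : ∀ θ : ℝ, Real.sin θ ≠ 0 → HasDerivAt f (D θ) θ := by
    intro θ h
    have hA : HasDerivAt (fun θ => (l + a * Real.cos θ) ^ 2 * κ)
        (2 * (l + a * Real.cos θ) * (a * -Real.sin θ) * κ) θ := by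
      exact hasDerivAt_congr'
        (((((Real.hasDerivAt_cos θ).const_mul a).const_add l).pow 2).mul_const κ)
        (fun y => rfl) (by push_cast; ring)
    have hq := ((hu_d θ).pow 2).div ((Real.hasDerivAt_sin θ).pow 2) (pow_ne_zero 2 h)
    refine hasDerivAt_congr' (hA.sub hq) (fun y => rfl) ?_
    push_cast; simp only [Pi.add_apply, Pi.sub_apply, Pi.mul_apply, Pi.neg_apply, Pi.pow_apply, Pi.div_apply]; ring
  have hd1 : deriv f θ₀ = 0 := by
    rw [(hder θ₀ hs).deriv, hD]
    simp only
    rw [hu, hl]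
    norm_num
  have hev : ∀ᶠ θ in nhds θ₀, Real.sin θ ≠ 0 :=
    Real.continuous_sin.continuousAt.eventually_ne hs
  have hev2 : deriv f =ᶠ[nhds θ₀] D := hev.mono fun θ hθ => (hder θ hθ).deriv
  have hu1 : (2 * a * Real.sin θ₀ * Real.cos θ₀ + 2 * l * Real.sin θ₀) * E = 0 := by
    linear_combination 2 * Real.sin θ₀ * E * hl
  set s := Real.sin θ₀ with hsd
  set c := Real.cos θ₀ with hcd
  set Dval : ℝ := (2 * (a * -s) * (a * -s) + 2 * (l + a * c) * (a * -c)) * κ -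
      (((2 * ((2 * a * s * c + 2 * l * s) * E) * ((2 * a * s * c + 2 * l * s) * E) +
          2 * ((a * s ^ 2 - 2 * l * (c + C)) * E - Lz) *
            ((2 * a * (c * c + s * -s) + 2 * l * c) * E)) * s ^ 2 +
          2 * ((a * s ^ 2 - 2 * l * (c + C)) * E - Lz) * ((2 * a * s * c + 2 * l * s) * E) *
            (2 * s * c) -
          (2 * ((a * s ^ 2 - 2 * l * (c + C)) * E - Lz) * ((2 * a * s * c + 2 * l * s) * E) *
            (2 * s * c) +
           ((a * s ^ 2 - 2 * l * (c + C)) * E - Lz) ^ 2 * (2 * (c * c + s * -s)))) * (s ^ 2) ^ 2 -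
        (2 * ((a * s ^ 2 - 2 * l * (c + C)) * E - Lz) * ((2 * a * s * c + 2 * l * s) * E) * s ^ 2 -
          ((a * s ^ 2 - 2 * l * (c + C)) * E - Lz) ^ 2 * (2 * s * c)) *
          (2 * s ^ 2 * (2 * s * c))) / ((s ^ 2) ^ 2) ^ 2 with hDval
  have hu1_d : HasDerivAt (fun θ => (2 * a * Real.sin θ * Real.cos θ + 2 * l * Real.sin θ) * E)
      ((2 * a * (c * c + s * -s) + 2 * l * c) * E) θ₀ := by
    exact hasDerivAt_congr'
      (((((Real.hasDerivAt_sin θ₀).mul (Real.hasDerivAt_cos θ₀)).const_mul (2 * a)).add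
        ((Real.hasDerivAt_sin θ₀).const_mul (2 * l))).mul_const E)
      (fun y => by simp only [Pi.add_apply, Pi.sub_apply, Pi.mul_apply, Pi.neg_apply, Pi.pow_apply, Pi.div_apply]; ring) (by ring)
  have hDd : HasDerivAt D Dval θ₀ := by
    have hA2 : HasDerivAt (fun θ => 2 * (l + a * Real.cos θ) * (a * -Real.sin θ) * κ)
        ((2 * (a * -s) * (a * -s) + 2 * (l + a * c) * (a * -c)) * κ) θ₀ := by
      exact hasDerivAt_congr'
        (((((Real.hasDerivAt_cos θ₀).const_mul a).const_add l).mul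
            (((Real.hasDerivAt_sin θ₀).neg).const_mul a)).const_mul 2 |>.mul_const κ)
        (fun y => by simp only [Pi.add_apply, Pi.sub_apply, Pi.mul_apply, Pi.neg_apply, Pi.pow_apply, Pi.div_apply]; ring) (by simp only [Pi.add_apply, Pi.sub_apply, Pi.mul_apply, Pi.neg_apply, Pi.pow_apply, Pi.div_apply]; ring)
    have hB : HasDerivAt (fun θ =>
        2 * ((a * Real.sin θ ^ 2 - 2 * l * (Real.cos θ + C)) * E - Lz) *
          ((2 * a * Real.sin θ * Real.cos θ + 2 * l * Real.sin θ) * E) * Real.sin θ ^ 2 -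
        ((a * Real.sin θ ^ 2 - 2 * l * (Real.cos θ + C)) * E - Lz) ^ 2 *
          (2 * Real.sin θ * Real.cos θ))
        ((2 * ((2 * a * s * c + 2 * l * s) * E) * ((2 * a * s * c + 2 * l * s) * E) +
          2 * ((a * s ^ 2 - 2 * l * (c + C)) * E - Lz) *
            ((2 * a * (c * c + s * -s) + 2 * l * c) * E)) * s ^ 2 +
          2 * ((a * s ^ 2 - 2 * l * (c + C)) * E - Lz) * ((2 * a * s * c + 2 * l * s) * E) *
            (2 * s * c) -
          (2 * ((a * s ^ 2 - 2 * l * (c + C)) * E - Lz) * ((2 * a * s * c + 2 * l * s) * E) *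
            (2 * s * c) +
           ((a * s ^ 2 - 2 * l * (c + C)) * E - Lz) ^ 2 * (2 * (c * c + s * -s)))) θ₀ := by
      exact hasDerivAt_congr'
        (((((hu_d θ₀).const_mul 2).mul hu1_d).mul ((Real.hasDerivAt_sin θ₀).pow 2)).sub
          (((hu_d θ₀).pow 2).mul
            (((Real.hasDerivAt_sin θ₀).mul (Real.hasDerivAt_cos θ₀)).const_mul 2)))
        (fun y => by simp only [Pi.add_apply, Pi.sub_apply, Pi.mul_apply, Pi.neg_apply, Pi.pow_apply, Pi.div_apply]; ring) (by push_cast; simp only [Pi.add_apply, Pi.sub_apply, Pi.mul_apply, Pi.neg_apply, Pi.pow_apply, Pi.div_apply]; ring)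
    have hden4 : HasDerivAt (fun θ => (Real.sin θ ^ 2) ^ 2) (2 * s ^ 2 * (2 * s * c)) θ₀ := by
      exact hasDerivAt_congr' (((Real.hasDerivAt_sin θ₀).pow 2).pow 2)
        (fun y => rfl) (by push_cast; simp only [Pi.add_apply, Pi.sub_apply, Pi.mul_apply, Pi.neg_apply, Pi.pow_apply, Pi.div_apply]; ring)
    have hq := hB.div hden4 (pow_ne_zero 2 (pow_ne_zero 2 hs))
    exact hasDerivAt_congr' (hA2.sub hq) (fun y => rfl) (by push_cast; ring)
  have hd2 : deriv (deriv f) θ₀ = 2 * a ^ 2 * κ * s ^ 2 := by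
    rw [hev2.deriv_eq, hDd.deriv, hDval]
    rw [hu, hu1, hl]
    field_simp
    ring
  exact ⟨hd1, hd2⟩

/-- Equation (29): with `(a² − 2alC + l²) E = a L_z`, the first derivatives of
`ψ` in `r` and `θ` vanish at the ring singularity and the second derivatives
equal `2κ` and `2κ (a² − l²)` respectively. -/
theorem PDpsi_second_derivs (m a l C Q E Lz κ θ₀ : ℝ)
    (ha : l ^ 2 < a ^ 2) (hQ : 0 < a ^ 2 - l ^ 2 + Q ^ 2)
    (hθ : Real.cos θ₀ = -l / a) (hκ : κ = 0 ∨ κ = -1)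
    (hE : (a ^ 2 - 2 * a * l * C + l ^ 2) * E = a * Lz) :
    deriv (fun r => PDpsi m a l C Q E Lz κ r θ₀) 0 = 0 ∧
    deriv (fun θ => PDpsi m a l C Q E Lz κ 0 θ) θ₀ = 0 ∧
    iteratedDeriv 2 (fun r => PDpsi m a l C Q E Lz κ r θ₀) 0 = 2 * κ ∧
    iteratedDeriv 2 (fun θ => PDpsi m a l C Q E Lz κ 0 θ) θ₀ =
      2 * κ * (a ^ 2 - l ^ 2) := by
  have ha2 : (0:ℝ) < a ^ 2 := lt_of_le_of_lt (sq_nonneg l) ha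
  have ha0 : a ≠ 0 := fun h => by simp [h] at ha2
  have hl0 : l + a * Real.cos θ₀ = 0 := by rw [hθ]; field_simp; ring
  have hs2 : Real.sin θ₀ ^ 2 = 1 - l ^ 2 / a ^ 2 := by
    have h1 := Real.sin_sq_add_cos_sq θ₀
    rw [hθ] at h1
    field_simp at h1 ⊢
    linarith
  have hspos : 0 < Real.sin θ₀ ^ 2 := by
    rw [hs2, sub_pos, div_lt_one ha2]; exact ha
  have hs0 : Real.sin θ₀ ≠ 0 := fun h => by rw [h] at hspos; simp at hspos
  have hu0 : (a * Real.sin θ₀ ^ 2 - 2 * l * (Real.cos θ₀ + C)) * E - Lz = 0 := by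
    rw [hs2, hθ]
    field_simp
    linear_combination hE
  have hnum : ∀ r : ℝ, -((r ^ 2 + a ^ 2 + l ^ 2 - 2 * a * l * C) ^ 2) * E ^ 2
      + 2 * a * (r ^ 2 + a ^ 2 + l ^ 2 - 2 * a * l * C) * E * Lz
      - a ^ 2 * Lz ^ 2 = -(E ^ 2 * r ^ 4) := by
    intro r
    linear_combination (-(2 * (r ^ 2 + a ^ 2 + l ^ 2 - 2 * a * l * C) * E)
      + a * Lz + (a ^ 2 + l ^ 2 - 2 * a * l * C) * E) * hE
  have hfr : (fun r => PDpsi m a l C Q E Lz κ r θ₀) = fun r : ℝ =>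
      (r ^ 2 + (l + a * Real.cos θ₀) ^ 2) * κ
        + E ^ 2 * r ^ 4 / (r ^ 2 - 2 * m * r + (a ^ 2 - l ^ 2 + Q ^ 2))
        - ((a * Real.sin θ₀ ^ 2 - 2 * l * (Real.cos θ₀ + C)) * E - Lz) ^ 2
            / Real.sin θ₀ ^ 2 := by
    funext r
    simp only [PDpsi]
    rw [hnum r]
    ring
  have hft : (fun θ => PDpsi m a l C Q E Lz κ 0 θ) = fun θ : ℝ =>
      (l + a * Real.cos θ) ^ 2 * κ -
        ((a * Real.sin θ ^ 2 - 2 * l * (Real.cos θ + C)) * E - Lz) ^ 2 / Real.sin θ ^ 2 := by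
    funext θ
    simp only [PDpsi]
    rw [hnum 0]
    norm_num
  obtain ⟨h1, h2⟩ := PD_aux_r κ E m (a ^ 2 - l ^ 2 + Q ^ 2) ((l + a * Real.cos θ₀) ^ 2)
    (((a * Real.sin θ₀ ^ 2 - 2 * l * (Real.cos θ₀ + C)) * E - Lz) ^ 2 / Real.sin θ₀ ^ 2) hQ
  obtain ⟨h3, h4⟩ := PD_aux_t a l C E Lz κ θ₀ hs0 hu0 hl0
  refine ⟨?_, ?_, ?_, ?_⟩
  · rw [hfr]; exact h1
  · rw [hft]; exact h3
  · rw [show (2:ℕ) = 1 + 1 from rfl, iteratedDeriv_succ, iteratedDeriv_one, hfr]; exact h2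
  · rw [show (2:ℕ) = 1 + 1 from rfl, iteratedDeriv_succ, iteratedDeriv_one, hft, h4, hs2]
    field_simp
end
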